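/- The complete bipartite graph K_{2,3} with colour classes {a, b, c} and {d, v} contains an (ab,cd)-linkage, an (ac,bd)-linkage, and an (ad,bc)-linkage, but contains no K_4-minor rooted at a, b, c, d. -/

import Mathlib

open SimpleGraph

variable {V : Type*}

/-- Branch-set definition of an `H`-minor in `G`. -/
def HasGraphMinor {W : Type*} (G : SimpleGraph V) (H : SimpleGraph W) : Prop :=
  ∃ B : W → Set V,
    (∀ w, (B w).Nonempty) ∧
    (∀ w, (G.induce (B w)).Connected) ∧
    (Pairwise fun w w' => Disjoint (B w) (B w')) ∧
    ∀ ⦃w w'⦄, H.Adj w w' → ∃ x ∈ B w, ∃ y ∈ B w', G.Adj x y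

/-- `A,B,C,D` are the branch sets of a `K₄`-minor rooted at `a,b,c,d`. -/
def RootedK4MinorOn (G : SimpleGraph V) (a b c d : V) (A B C D : Set V) : Prop :=
    a ∈ A ∧ b ∈ B ∧ c ∈ C ∧ d ∈ D ∧
    (G.induce A).Connected ∧ (G.induce B).Connected ∧
    (G.induce C).Connected ∧ (G.induce D).Connected ∧
    Disjoint A B ∧ Disjoint A C ∧ Disjoint A D ∧
    Disjoint B C ∧ Disjoint B D ∧ Disjoint C D ∧
    (∃ x ∈ A, ∃ y ∈ B, G.Adj x y) ∧ (∃ x ∈ A, ∃ y ∈ C, G.Adj x y) ∧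
    (∃ x ∈ A, ∃ y ∈ D, G.Adj x y) ∧ (∃ x ∈ B, ∃ y ∈ C, G.Adj x y) ∧
    (∃ x ∈ B, ∃ y ∈ D, G.Adj x y) ∧ (∃ x ∈ C, ∃ y ∈ D, G.Adj x y)

/-- A `K₄`-minor rooted at `a,b,c,d`. -/
def RootedK4Minor (G : SimpleGraph V) (a b c d : V) : Prop :=
  ∃ A B C D : Set V, RootedK4MinorOn G a b c d A B C D

/-- A `K₃`-minor rooted at `a,b,c`. -/
def RootedK3Minor (G : SimpleGraph V) (a b c : V) : Prop :=
  ∃ A B C : Set V,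
    a ∈ A ∧ b ∈ B ∧ c ∈ C ∧
    (G.induce A).Connected ∧ (G.induce B).Connected ∧ (G.induce C).Connected ∧
    Disjoint A B ∧ Disjoint A C ∧ Disjoint B C ∧
    (∃ x ∈ A, ∃ y ∈ B, G.Adj x y) ∧ (∃ x ∈ A, ∃ y ∈ C, G.Adj x y) ∧
    (∃ x ∈ B, ∃ y ∈ C, G.Adj x y)

/-- Add a new apex vertex adjacent to every vertex of `s`. -/
def Apex (G : SimpleGraph V) (s : Set V) : SimpleGraph (Option V) where
  Adj x y :=
    (∃ u v, x = some u ∧ y = some v ∧ G.Adj u v) ∨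
    (∃ u, x = some u ∧ y = none ∧ u ∈ s) ∨
    (∃ v, x = none ∧ y = some v ∧ v ∈ s)
  symm := by
    refine ⟨?_⟩
    rintro x y (⟨u, v, rfl, rfl, h⟩ | ⟨u, rfl, rfl, h⟩ | ⟨v, rfl, rfl, h⟩)
    · exact Or.inl ⟨v, u, rfl, rfl, h.symm⟩
    · exact Or.inr (Or.inr ⟨u, rfl, rfl, h⟩)
    · exact Or.inr (Or.inl ⟨v, rfl, rfl, h⟩)
  loopless := by
    refine ⟨?_⟩
    rintro x (⟨u, v, rfl, h, hadj⟩ | ⟨u, rfl, h, _⟩ | ⟨v, h, rfl, _⟩)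
    · rw [Option.some_inj] at h; subst h; exact hadj.ne rfl
    · cases h
    · cases h

/-- Planarity, via Wagner's theorem: no `K₅`-minor and no `K₃,₃`-minor. -/
def IsPlanar (G : SimpleGraph V) : Prop :=
  ¬ HasGraphMinor G (⊤ : SimpleGraph (Fin 5)) ∧
  ¬ HasGraphMinor G (completeBipartiteGraph (Fin 3) (Fin 3))

/-- `G` is `k`-connected: more than `k` vertices, and deleting fewer than `k`
vertices leaves a connected graph. -/
def KConnected (k : ℕ) (G : SimpleGraph V) : Prop :=
  k < Nat.card V ∧ ∀ S : Set V, S.Finite → S.ncard < k → (G.induce Sᶜ).Connected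

/-- An `(s₁t₁,s₂t₂)`-linkage: an `s₁t₁`-path and an `s₂t₂`-path that are disjoint. -/
def Linkage (G : SimpleGraph V) (s₁ t₁ s₂ t₂ : V) : Prop :=
  ∃ (P : G.Walk s₁ t₁) (Q : G.Walk s₂ t₂),
    P.IsPath ∧ Q.IsPath ∧ P.support.Disjoint Q.support

/-- `G` is obtained from its induced subgraph on `S` by attaching, to each triangle,
a (possibly empty) clique: `t x` records the triangle of the clique containing `x ∉ S`. -/
def CliqueExpansion (G : SimpleGraph V) (S : Set V) (t : V → Finset V) : Prop :=
  ∀ x ∉ S, ↑(t x) ⊆ S ∧ (t x).card = 3 ∧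
    (∀ y ∈ t x, ∀ z ∈ t x, y ≠ z → G.Adj y z) ∧
    (∀ y, G.Adj x y ↔ (y ∈ t x ∨ (y ∉ S ∧ y ≠ x ∧ t y = t x)))

/-- `H` is a planar graph with outerface cycle `(p,q,r,s)`, every internal face a
triangle, and every triangle a face.  (Combinatorial surrogate: `p,q,r,s` bound a
common face — witnessed by planarity of the graph with an apex added adjacent to
them — the edge count of a near-triangulation of a quadrilateral, and no
separating triangle.) -/
def IsQuadTriangulation {U : Type*} (H : SimpleGraph U) (p q r s : U) : Prop :=
  p ≠ q ∧ p ≠ r ∧ p ≠ s ∧ q ≠ r ∧ q ≠ s ∧ r ≠ s ∧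
  H.Adj p q ∧ H.Adj q r ∧ H.Adj r s ∧ H.Adj s p ∧
  IsPlanar H ∧ IsPlanar (Apex H {p, q, r, s}) ∧
  H.edgeSet.ncard + 7 = 3 * Nat.card U ∧
  ∀ T : Finset U, T.card = 3 → (∀ x ∈ T, ∀ y ∈ T, x ≠ y → H.Adj x y) →
    (((↑T)ᶜ : Set U) = ∅ ∨ (H.induce (↑T)ᶜ).Connected)

/-- `W` is an `(a,b,c,d)`-web. -/
def IsWeb (W : SimpleGraph V) (a b c d : V) : Prop :=
  ∃ (S : Set V) (ha : a ∈ S) (hb : b ∈ S) (hc : c ∈ S) (hd : d ∈ S),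
    IsQuadTriangulation (W.induce S) ⟨a, ha⟩ ⟨b, hb⟩ ⟨c, hc⟩ ⟨d, hd⟩ ∧
    ∃ t, CliqueExpansion W S t

/-- `W` is an `{a,b,c,d}`-web, i.e. an `(a',b',c',d')`-web for some ordering. -/
def IsUnorderedWeb (W : SimpleGraph V) (a b c d : V) : Prop :=
  ∃ p q r s : V, ({p, q, r, s} : Set V) = {a, b, c, d} ∧ IsWeb W p q r s

/-- A separation `(A, B)` of `G` (given by the vertex sets of the two sides). -/
def IsSeparation (G : SimpleGraph V) (A B : Set V) : Prop :=
  A ∪ B = Set.univ ∧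
  (∀ ⦃x y⦄, G.Adj x y → (x ∈ A ∧ y ∈ A) ∨ (x ∈ B ∧ y ∈ B)) ∧
  (A \ B).Nonempty ∧ (B \ A).Nonempty


section Aux
abbrev K23 := completeBipartiteGraph (Fin 3) (Fin 2)

lemma k23_adj (i : Fin 3) (j : Fin 2) : K23.Adj (Sum.inl i) (Sum.inr j) := by
  simp [completeBipartiteGraph]

lemma linkage1 : Linkage K23 (Sum.inl 0) (Sum.inl 1) (Sum.inl 2) (Sum.inr 0) := by
  refine ⟨Walk.cons (k23_adj 0 1) (Walk.cons ((k23_adj 1 1).symm) Walk.nil),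
    Walk.cons (k23_adj 2 0) Walk.nil, ?_, ?_, ?_⟩ <;>
    simp [Walk.isPath_def, List.Disjoint]

lemma linkage2 : Linkage K23 (Sum.inl 0) (Sum.inl 2) (Sum.inl 1) (Sum.inr 0) := by
  refine ⟨Walk.cons (k23_adj 0 1) (Walk.cons ((k23_adj 2 1).symm) Walk.nil),
    Walk.cons (k23_adj 1 0) Walk.nil, ?_, ?_, ?_⟩ <;>
    simp [Walk.isPath_def, List.Disjoint]

lemma linkage3 : Linkage K23 (Sum.inl 0) (Sum.inr 0) (Sum.inl 1) (Sum.inl 2) := by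
  refine ⟨Walk.cons (k23_adj 0 0) Walk.nil,
    Walk.cons (k23_adj 1 1) (Walk.cons ((k23_adj 2 1).symm) Walk.nil), ?_, ?_, ?_⟩ <;>
    simp [Walk.isPath_def, List.Disjoint]

lemma edge_mem {A B : Set (Fin 3 ⊕ Fin 2)} {x y : Fin 3 ⊕ Fin 2}
    (hx : x ∈ A) (hy : y ∈ B) (h : K23.Adj x y)
    (h0A : Sum.inr 0 ∉ A) (h0B : Sum.inr 0 ∉ B) :
    Sum.inr 1 ∈ A ∨ Sum.inr 1 ∈ B := by
  rcases h with ⟨hl, hr⟩ | ⟨hl, hr⟩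
  · rcases y with _ | j
    · simp at hr
    · fin_cases j
      · exact absurd hy h0B
      · exact Or.inr hy
  · rcases x with _ | j
    · simp at hl
    · fin_cases j
      · exact absurd hx h0A
      · exact Or.inl hx

lemma no_k4 : ¬ RootedK4Minor K23 (Sum.inl 0) (Sum.inl 1) (Sum.inl 2) (Sum.inr 0) := by
  rintro ⟨A, B, C, D, hA, hB, hC, hD, -, -, -, -, hAB, hAC, hAD, hBC, hBD, hCD,
    ⟨x1, hx1, y1, hy1, e1⟩, ⟨x2, hx2, y2, hy2, e2⟩, -, ⟨x3, hx3, y3, hy3, e3⟩, -, -⟩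
  have h0A : Sum.inr 0 ∉ A := fun h => Set.disjoint_left.mp hAD h hD
  have h0B : Sum.inr 0 ∉ B := fun h => Set.disjoint_left.mp hBD h hD
  have h0C : Sum.inr 0 ∉ C := fun h => Set.disjoint_left.mp hCD h hD
  have h1 := edge_mem hx1 hy1 e1 h0A h0B
  have h2 := edge_mem hx2 hy2 e2 h0A h0C
  have h3 := edge_mem hx3 hy3 e3 h0B h0C
  rcases h1 with h1 | h1 <;> rcases h2 with h2 | h2 <;> rcases h3 with h3 | h3
  · exact Set.disjoint_left.mp hAB h1 h3
  · exact Set.disjoint_left.mp hAC h2 h3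
  · exact Set.disjoint_left.mp hAB h1 h3
  · exact Set.disjoint_left.mp hAC h1 h2
  · exact Set.disjoint_left.mp hAB h2 h1
  · exact Set.disjoint_left.mp hAB h2 h1
  · exact Set.disjoint_left.mp hBC h1 h2
  · exact Set.disjoint_left.mp hBC h1 h2

end Aux

/-- `K_{2,3}` with colour classes `{a,b,c}` and `{d,v}` has all
three linkages but no `K₄`-minor rooted at `a,b,c,d`. -/
theorem K23_linkages_no_rooted_K4_minor :
    Linkage (completeBipartiteGraph (Fin 3) (Fin 2))
        (Sum.inl 0) (Sum.inl 1) (Sum.inl 2) (Sum.inr 0) ∧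
    Linkage (completeBipartiteGraph (Fin 3) (Fin 2))
        (Sum.inl 0) (Sum.inl 2) (Sum.inl 1) (Sum.inr 0) ∧
    Linkage (completeBipartiteGraph (Fin 3) (Fin 2))
        (Sum.inl 0) (Sum.inr 0) (Sum.inl 1) (Sum.inl 2) ∧
    ¬ RootedK4Minor (completeBipartiteGraph (Fin 3) (Fin 2))
        (Sum.inl 0) (Sum.inl 1) (Sum.inl 2) (Sum.inr 0) := by
  exact ⟨linkage1, linkage2, linkage3, no_k4⟩
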